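/- arXiv:2405.03309 — 2 statements merged into one kernel-verified Lean document; each statement's English description precedes it below -/
import Mathlib

section
/- Every (m,n)_k-ring graph is weakly connected: from every vertex there is a directed path to the vertex all of whose columns equal the column (0,...,0,1)^T. -/
open Finset

/-- Vertical cyclic rotation of a pattern (of height `m`) by `r` rows. -/
def vrot {m j k : ℕ} (r : Fin m) (P : Fin m → Fin j → Fin k) : Fin m → Fin j → Fin k :=
  fun i => P (i + r)

/-- A pattern viewed as a word of rows, in the lexicographic order. -/
def patLex {m j k : ℕ} (P : Fin m → Fin j → Fin k) : Lex (Fin m → Lex (Fin j → Fin k)) :=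
  toLex (fun i => toLex (P i))

/-- A pattern is row-Lyndon if it is lexicographically strictly smaller than every
nontrivial vertical rotation of itself. -/
def IsRowLyndon {m j k : ℕ} (P : Fin m → Fin j → Fin k) : Prop :=
  ∀ r : Fin m, (r : ℕ) ≠ 0 → patLex P < patLex (vrot r P)

/-- A pattern is the `lexmin` representative of its vertical rotation class. -/
def IsLexmin {m j k : ℕ} (P : Fin m → Fin j → Fin k) : Prop :=
  ∀ r : Fin m, patLex P ≤ patLex (vrot r P)

/-- Append the column `R` on the right of the pattern `P`. -/
def snocPat {m j k : ℕ} (P : Fin m → Fin j → Fin k) (R : Fin m → Fin k) :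
    Fin m → Fin (j + 1) → Fin k :=
  fun i => Fin.snoc (P i) (R i)

/-- Drop the leftmost column of the pattern `Q`. -/
def tailPat {m j k : ℕ} (Q : Fin m → Fin (j + 1) → Fin k) : Fin m → Fin j → Fin k :=
  fun i t => Q i t.succ

/-- The edge relation of the `(m, j+1)_k`-ring graph: there is an edge labeled `R` from the
vertex `P₁` to the vertex `P₂` iff `P₁` and `P₂` are lexmin representatives, the pattern
`[P₁, R]` of shape `(m, j+1)` is row-aperiodic (its lexmin rotation is row-Lyndon), `P₂` is
the lexmin of the last `j` columns of `[P₁, R]`, and `R` is the lexicographically smallest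
column producing this rotation class from `P₁`. -/
def RingEdge {m j k : ℕ} (P₁ P₂ : Fin m → Fin j → Fin k) (R : Fin m → Fin k) : Prop :=
  IsLexmin P₁ ∧ IsLexmin P₂ ∧
  (∃ r : Fin m, IsRowLyndon (vrot r (snocPat P₁ R))) ∧
  (∃ r : Fin m, vrot r (tailPat (snocPat P₁ R)) = P₂) ∧
  (∀ R' : Fin m → Fin k,
    (∃ r : Fin m, vrot r (snocPat P₁ R') = snocPat P₁ R) → toLex R ≤ toLex R')

section Aux

variable {m j k : ℕ}

theorem mod_two_cases (m x : ℕ) (hx : x < 2 * m) :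
    x % m = if x < m then x else x - m := by
  split
  · exact Nat.mod_eq_of_lt (by omega)
  · rw [Nat.mod_eq_sub_mod (by omega)]
    exact Nat.mod_eq_of_lt (by omega)

theorem vrot_vrot (r s : Fin m) (P : Fin m → Fin j → Fin k) :
    vrot s (vrot r P) = vrot (s + r) P := by
  funext i t
  simp [vrot, add_assoc]

theorem vrot_zero [NeZero m] (P : Fin m → Fin j → Fin k) : vrot 0 P = P := by
  funext i t
  simp [vrot]

theorem patLex_inj {P Q : Fin m → Fin j → Fin k} (h : patLex P = patLex Q) : P = Q := h

theorem patLex_lt_of {P Q : Fin m → Fin j → Fin k} (i : Fin m)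
    (h1 : ∀ i', i' < i → P i' = Q i') (h2 : toLex (P i) < toLex (Q i)) :
    patLex P < patLex Q :=
  ⟨i, fun i' hi' => h1 i' hi', h2⟩

theorem colLex_lt_of {R S : Fin m → Fin k} (i : Fin m)
    (h1 : ∀ i', i' < i → R i' = S i') (h2 : R i < S i) : toLex R < toLex S :=
  ⟨i, fun i' hi' => h1 i' hi', h2⟩

/-- Row-aperiodicity of a pattern. -/
def Ap (P : Fin m → Fin j → Fin k) : Prop := ∀ r : Fin m, vrot r P = P → (r : ℕ) = 0

/-- Aperiodicity of a single column. -/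
def ColAp (R : Fin m → Fin k) : Prop := ∀ r : Fin m, (∀ i, R (i + r) = R i) → (r : ℕ) = 0

theorem ap_of_col {Q : Fin m → Fin j → Fin k} (t : Fin j) {R : Fin m → Fin k}
    (hR : ColAp R) (hcol : ∀ i, Q i t = R i) : Ap Q := by
  intro r hr
  apply hR r
  intro i
  have h := congrFun (congrFun hr i) t
  simp only [vrot] at h
  rw [hcol, hcol] at h
  exact h

theorem colAp_shift [NeZero m] {R : Fin m → Fin k} (hR : ColAp R) (c : Fin m) :
    ColAp (fun i => R (i + c)) := by
  intro r hr
  apply hR r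
  intro x
  have h := hr (x - c)
  simp only at h
  rw [show x - c + r + c = x + r by abel, show x - c + c = x by abel] at h
  exact h

theorem ap_vrot [NeZero m] {Q : Fin m → Fin j → Fin k} (h : Ap Q) (r : Fin m) :
    Ap (vrot r Q) := by
  intro s hs
  rw [vrot_vrot] at hs
  apply h s
  funext i t
  have h2 := congrFun (congrFun hs (i - r)) t
  simp only [vrot] at h2 ⊢
  rw [show i - r + (s + r) = i + s by abel, show i - r + r = i by abel] at h2
  exact h2

theorem exists_min_list {α : Type*} {β : Type*} [Preorder β]
    (tot : ∀ a b : β, a ≤ b ∨ b ≤ a) (f : α → β) :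
    ∀ l : List α, l ≠ [] → ∃ x ∈ l, ∀ y ∈ l, f x ≤ f y := by
  intro l
  induction l with
  | nil => simp
  | cons a l ih =>
    intro _
    rcases eq_or_ne l [] with rfl | hl
    · exact ⟨a, by simp, by simp⟩
    · obtain ⟨x, hx, hmin⟩ := ih hl
      rcases tot (f a) (f x) with h | h
      · refine ⟨a, by simp, fun y hy => ?_⟩
        rcases List.mem_cons.mp hy with rfl | hy
        · exact le_refl _
        · exact le_trans h (hmin y hy)
      · refine ⟨x, by simp [hx], fun y hy => ?_⟩
        rcases List.mem_cons.mp hy with rfl | hy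
        · exact h
        · exact hmin y hy

theorem patLex_total (a b : Fin m → Fin j → Fin k) :
    patLex a ≤ patLex b ∨ patLex b ≤ patLex a := by
  haveI h1 : IsTrichotomous (Lex (Fin j → Fin k)) (· < ·) :=
    ⟨fun x y => (Pi.isTrichotomous_lex (· < ·) (fun {_} => (· < ·))
      (IsWellFounded.wf)).trichotomous (ofLex x) (ofLex y)⟩
  have h2 := (Pi.isTrichotomous_lex (· < ·) (fun {_} => (· < ·))
      (IsWellFounded.wf : WellFounded ((· < ·) : Fin m → Fin m → Prop))).trichotomous
      (fun i => toLex (a i)) (fun i => toLex (b i))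
  rcases (or_iff_not_imp_left.2 fun ha => or_iff_not_imp_right.2 fun hb => h2 ha hb :
    _ ∨ _ ∨ _) with h | h | h
  · exact Or.inl (le_of_lt h)
  · exact Or.inl (le_of_eq h)
  · exact Or.inr (le_of_lt h)

theorem exists_min (hm0 : 0 < m) (Q : Fin m → Fin j → Fin k) :
    ∃ r : Fin m, ∀ s : Fin m, patLex (vrot r Q) ≤ patLex (vrot s Q) := by
  obtain ⟨r, -, hr⟩ := exists_min_list (β := Lex (Fin m → Lex (Fin j → Fin k))) (fun a b => patLex_total a b)
      (fun s : Fin m => patLex (vrot s Q)) (List.finRange m)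
      (List.ne_nil_of_length_pos (by simp; omega))
  exact ⟨r, fun s => hr s (List.mem_finRange s)⟩

theorem isLexmin_min [NeZero m] {Q : Fin m → Fin j → Fin k} {r : Fin m}
    (hmin : ∀ s, patLex (vrot r Q) ≤ patLex (vrot s Q)) :
    IsLexmin (vrot r Q) := by
  intro s
  rw [vrot_vrot]
  exact hmin (s + r)

theorem isRowLyndon_min [NeZero m] {Q : Fin m → Fin j → Fin k} (hap : Ap Q) {r : Fin m}
    (hmin : ∀ s, patLex (vrot r Q) ≤ patLex (vrot s Q)) :
    IsRowLyndon (vrot r Q) := by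
  intro s hs
  rw [vrot_vrot]
  refine lt_of_le_of_ne (hmin (s + r)) (fun he => hs ?_)
  have h2 : vrot r Q = vrot (s + r) Q := patLex_inj he
  have h3 : vrot s Q = Q := by
    funext i t
    have h4 := congrFun (congrFun h2 (i - r)) t
    simp only [vrot] at h4 ⊢
    rw [show i - r + r = i by abel, show i - r + (s + r) = i + s by abel] at h4
    exact h4.symm
  exact hap s h3

theorem lexmin_unique [NeZero m] {Q : Fin m → Fin j → Fin k} (hap : Ap Q) {a b : Fin m}
    (ha : IsLexmin (vrot a Q)) (hb : IsLexmin (vrot b Q)) : vrot a Q = vrot b Q := by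
  have h1 : patLex (vrot a Q) ≤ patLex (vrot b Q) := by
    have h := ha (b - a)
    rwa [vrot_vrot, show b - a + a = b by abel] at h
  have h2 : patLex (vrot b Q) ≤ patLex (vrot a Q) := by
    have h := hb (a - b)
    rwa [vrot_vrot, show a - b + b = a by abel] at h
  exact patLex_inj (le_antisymm h1 h2)

theorem snocPat_castSucc (P : Fin m → Fin j → Fin k) (R : Fin m → Fin k) (i : Fin m)
    (t : Fin j) : snocPat P R i t.castSucc = P i t := by
  simp [snocPat]

theorem snocPat_last (P : Fin m → Fin j → Fin k) (R : Fin m → Fin k) (i : Fin m) :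
    snocPat P R i (Fin.last j) = R i := by
  simp [snocPat]

theorem tailPat_snoc (P : Fin m → Fin j → Fin k) (R : Fin m → Fin k) (i : Fin m) (t : Fin j) :
    tailPat (snocPat P R) i t = if h : (t : ℕ) + 1 < j then P i ⟨(t : ℕ) + 1, h⟩ else R i := by
  have ht := t.isLt
  unfold tailPat snocPat
  split
  · next h =>
    rw [show t.succ = Fin.castSucc ⟨(t : ℕ) + 1, h⟩ from Fin.ext rfl, Fin.snoc_castSucc]
  · next h =>
    rw [show t.succ = Fin.last j from Fin.ext (by simp; omega), Fin.snoc_last]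

end Aux

section Main

/-- The column `(0,…,0,1)ᵀ`. -/
def c0 (m k : ℕ) (hm : 2 ≤ m) (hk : 2 ≤ k) : Fin m → Fin k :=
  fun i => if (i : ℕ) = m - 1 then ⟨1, by omega⟩ else ⟨0, by omega⟩

variable {m j k : ℕ}

theorem c0_eq_one (hm : 2 ≤ m) (hk : 2 ≤ k) {x : Fin m} (hx : (x : ℕ) = m - 1) :
    c0 m k hm hk x = ⟨1, by omega⟩ := by
  simp [c0, hx]

theorem c0_eq_zero (hm : 2 ≤ m) (hk : 2 ≤ k) {x : Fin m} (hx : (x : ℕ) ≠ m - 1) :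
    c0 m k hm hk x = ⟨0, by omega⟩ := by
  simp [c0, hx]

theorem colAp_c0 (hm : 2 ≤ m) (hk : 2 ≤ k) : ColAp (c0 m k hm hk) := by
  haveI : NeZero m := ⟨by omega⟩
  intro r hr
  by_contra hr0
  have hrv : 1 ≤ (r : ℕ) := by omega
  set lst : Fin m := ⟨m - 1, by omega⟩ with hlst
  have h := hr (lst - r)
  rw [show lst - r + r = lst by abel] at h
  have h1 : c0 m k hm hk lst = ⟨1, by omega⟩ := c0_eq_one hm hk rfl
  have hv : ((lst - r : Fin m) : ℕ) = m - 1 - (r : ℕ) := by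
    rw [Fin.sub_def]
    simp only [hlst]
    rw [mod_two_cases m _ (by have := r.isLt; omega)]
    have := r.isLt
    split <;> omega
  have h2 : c0 m k hm hk (lst - r) = ⟨0, by omega⟩ :=
    c0_eq_zero hm hk (by rw [hv]; have := r.isLt; omega)
  rw [h1, h2] at h
  exact absurd (congrArg Fin.val h) (by simp)

theorem isLexmin_T (hm : 2 ≤ m) (hj : 1 ≤ j) (hk : 2 ≤ k) :
    IsLexmin (fun i _ => c0 m k hm hk i : Fin m → Fin j → Fin k) := by
  haveI : NeZero m := ⟨by omega⟩
  intro r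
  rcases eq_or_ne r 0 with rfl | hr
  · rw [vrot_zero]
  · apply le_of_lt
    have hrv : 1 ≤ (r : ℕ) := by
      rcases Nat.eq_zero_or_pos (r : ℕ) with h | h
      · exact absurd (Fin.ext (by simpa using h)) hr
      · omega
    have hrlt := r.isLt
    set lst : Fin m := ⟨m - 1, by omega⟩ with hlst
    have hv : ((lst - r : Fin m) : ℕ) = m - 1 - (r : ℕ) := by
      rw [Fin.sub_def]
      simp only [hlst]
      rw [mod_two_cases m _ (by omega)]
      split <;> omega
    apply patLex_lt_of (lst - r)
    · intro i' hi'
      have hi'v : (i' : ℕ) < m - 1 - (r : ℕ) := by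
        have := hi'
        rw [Fin.lt_def, hv] at this
        exact this
      funext t
      show c0 m k hm hk i' = c0 m k hm hk (i' + r)
      have hav : ((i' + r : Fin m) : ℕ) = (i' : ℕ) + (r : ℕ) := by
        rw [Fin.add_def]
        exact Nat.mod_eq_of_lt (by omega)
      rw [c0_eq_zero hm hk (by omega), c0_eq_zero hm hk (by rw [hav]; omega)]
    · show toLex (fun _ => c0 m k hm hk (lst - r) : Fin j → Fin k)
        < toLex (fun _ => c0 m k hm hk (lst - r + r) : Fin j → Fin k)
      rw [show lst - r + r = lst by abel]
      rw [c0_eq_zero hm hk (by rw [hv]; omega), c0_eq_one hm hk rfl]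
      exact colLex_lt_of ⟨0, by omega⟩ (fun t' ht' => absurd ht' (by simp [Fin.lt_def]))
        (by simp [Fin.lt_def])

theorem ap_T (hm : 2 ≤ m) (hj : 1 ≤ j) (hk : 2 ≤ k) :
    Ap (fun i _ => c0 m k hm hk i : Fin m → Fin j → Fin k) :=
  ap_of_col ⟨0, by omega⟩ (colAp_c0 hm hk) (fun _ => rfl)

/-- The key induction: if the last columns (from index `n` on) of an aperiodic lexmin vertex
are all equal to the shifted column `c0 (· + c)`, then the all-`c0` vertex is reachable. -/
theorem reach (hm : 2 ≤ m) (hj : 1 ≤ j) (hk : 2 ≤ k) :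
    ∀ n : ℕ, ∀ (Q : Fin m → Fin j → Fin k) (c : Fin m),
      IsLexmin Q → Ap Q →
      (∀ t : Fin j, n ≤ (t : ℕ) → ∀ i, Q i t = c0 m k hm hk (i + c)) →
      Relation.ReflTransGen (fun P₁ P₂ : Fin m → Fin j → Fin k => ∃ R, RingEdge P₁ P₂ R) Q
        (fun i _ => c0 m k hm hk i) := by
  haveI : NeZero m := ⟨by omega⟩
  intro n
  induction n with
  | zero =>
    intro Q c hlex hap hinv
    have hQ : Q = vrot c (fun i _ => c0 m k hm hk i) := by
      funext i t
      exact hinv t (Nat.zero_le _) i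
    have hu : vrot c (fun i _ => c0 m k hm hk i : Fin m → Fin j → Fin k)
        = vrot 0 (fun i _ => c0 m k hm hk i) := by
      apply lexmin_unique (ap_T hm hj hk)
      · rw [← hQ]; exact hlex
      · rw [vrot_zero]; exact isLexmin_T hm hj hk
    rw [hQ, hu, vrot_zero]
  | succ n ih =>
    intro Q c hlex hap hinv
    set R : Fin m → Fin k := fun i => c0 m k hm hk (i + c) with hRdef
    have hcolR : ColAp R := colAp_shift (colAp_c0 hm hk) c
    have hap2 : Ap (snocPat Q R) :=
      ap_of_col (Fin.last j) hcolR (fun i => snocPat_last Q R i)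
    have hapT' : Ap (tailPat (snocPat Q R)) := by
      refine ap_of_col (⟨j - 1, by omega⟩ : Fin j) hcolR (fun i => ?_)
      rw [tailPat_snoc, dif_neg (show ¬(j - 1 + 1 < j) by omega)]
    obtain ⟨r, hr⟩ := exists_min (by omega) (tailPat (snocPat Q R))
    have hlex' : IsLexmin (vrot r (tailPat (snocPat Q R))) := isLexmin_min hr
    have hap' : Ap (vrot r (tailPat (snocPat Q R))) := ap_vrot hapT' r
    have hedge : RingEdge Q (vrot r (tailPat (snocPat Q R))) R := by
      refine ⟨hlex, hlex', ?_, ⟨r, rfl⟩, ?_⟩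
      · obtain ⟨r2, hr2⟩ := exists_min (by omega) (snocPat Q R)
        exact ⟨r2, isRowLyndon_min hap2 hr2⟩
      · rintro R' ⟨s, hs⟩
        have hQs : vrot s Q = Q := by
          funext i t
          have h := congrFun (congrFun hs i) t.castSucc
          simp only [vrot, snocPat_castSucc] at h
          exact h
        have hs0 : s = 0 := Fin.ext (by simpa using hap s hQs)
        have hR' : R' = R := by
          funext i
          have h := congrFun (congrFun hs i) (Fin.last j)
          simp only [vrot, snocPat_last, hs0, add_zero] at h
          exact h
        rw [hR']
    refine Relation.ReflTransGen.head ⟨R, hedge⟩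
      (ih (vrot r (tailPat (snocPat Q R))) (r + c) hlex' hap' ?_)
    intro t ht i
    show tailPat (snocPat Q R) (i + r) t = c0 m k hm hk (i + (r + c))
    rw [tailPat_snoc]
    split
    · next h =>
      rw [hinv ⟨(t : ℕ) + 1, h⟩ (by simp; omega) (i + r)]
      rw [show i + r + c = i + (r + c) by abel]
    · show c0 m k hm hk (i + r + c) = c0 m k hm hk (i + (r + c))
      rw [show i + r + c = i + (r + c) by abel]

end Main

set_option maxHeartbeats 1000000 in
/-- Every `(m, j+1)_k`-ring graph is weakly connected: from every vertex there is a directed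
path to the vertex all of whose columns equal `(0,…,0,1)ᵀ`. -/
theorem ringGraph_connected (m j k : ℕ) (hm : 2 ≤ m) (hj : 1 ≤ j) (hk : 2 ≤ k)
    (P : Fin m → Fin j → Fin k) (hP : IsLexmin P) :
    Relation.ReflTransGen (fun P₁ P₂ : Fin m → Fin j → Fin k => ∃ R, RingEdge P₁ P₂ R) P
      (fun i _ => if (i : ℕ) = m - 1 then (⟨1, by omega⟩ : Fin k) else ⟨0, by omega⟩) := by
  haveI : NeZero m := ⟨by omega⟩
  show Relation.ReflTransGen _ P (fun i _ => c0 m k hm hk i)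
  set R : Fin m → Fin k := c0 m k hm hk with hRdef
  have hap2 : Ap (snocPat P R) :=
    ap_of_col (Fin.last j) (colAp_c0 hm hk) (fun i => snocPat_last P R i)
  have hapT' : Ap (tailPat (snocPat P R)) := by
    refine ap_of_col (⟨j - 1, by omega⟩ : Fin j) (colAp_c0 hm hk) (fun i => ?_)
    rw [tailPat_snoc, dif_neg (show ¬(j - 1 + 1 < j) by omega)]
  obtain ⟨r, hr⟩ := exists_min (by omega) (tailPat (snocPat P R))
  have hlex' : IsLexmin (vrot r (tailPat (snocPat P R))) := isLexmin_min hr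
  have hap' : Ap (vrot r (tailPat (snocPat P R))) := ap_vrot hapT' r
  have hedge : RingEdge P (vrot r (tailPat (snocPat P R))) R := by
    refine ⟨hP, hlex', ?_, ⟨r, rfl⟩, ?_⟩
    · obtain ⟨r2, hr2⟩ := exists_min (by omega) (snocPat P R)
      exact ⟨r2, isRowLyndon_min hap2 hr2⟩
    · rintro R' ⟨s, hs⟩
      -- last column of the rotation equation: R' (i + s) = c0 i for all i
      have hcol : ∀ i, R' (i + s) = R i := by
        intro i
        have h := congrFun (congrFun hs i) (Fin.last j)
        simp only [vrot, snocPat_last] at h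
        exact h
      rcases eq_or_ne s 0 with rfl | hs0
      · have hR' : R' = R := by
          funext i
          have h := hcol i
          rwa [add_zero] at h
        rw [hR']
      · -- R' is the indicator of position `s - 1`, which is lex-greater than c0
        apply le_of_lt
        have hsv : 1 ≤ (s : ℕ) := by
          rcases Nat.eq_zero_or_pos (s : ℕ) with h | h
          · exact absurd (Fin.ext (by simpa using h)) hs0
          · omega
        have hslt := s.isLt
        set lst : Fin m := ⟨m - 1, by omega⟩ with hlst
        have histar : ((lst + s : Fin m) : ℕ) = (s : ℕ) - 1 := by
          rw [Fin.add_def]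
          simp only [hlst]
          rw [mod_two_cases m _ (by omega)]
          split <;> omega
        have hR'eval : ∀ x : Fin m, R' x = R (x - s) := by
          intro x
          have h := hcol (x - s)
          rwa [show x - s + s = x by abel] at h
        apply colLex_lt_of (lst + s)
        · intro i' hi'
          have hi'v : (i' : ℕ) < (s : ℕ) - 1 := by
            have := hi'
            rwa [Fin.lt_def, histar] at this
          have h1 : R i' = ⟨0, by omega⟩ := c0_eq_zero hm hk (by omega)
          have h2 : R' i' = ⟨0, by omega⟩ := by
            rw [hR'eval]
            refine c0_eq_zero hm hk (fun hv => ?_)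
            have : i' - s = lst := Fin.ext (by simpa using hv)
            have : i' = lst + s := by
              rw [← this]; abel
            rw [this, histar] at hi'v
            omega
          rw [h1, h2]
        · have h1 : R (lst + s) = ⟨0, by omega⟩ :=
            c0_eq_zero hm hk (by rw [histar]; omega)
          have h2 : R' (lst + s) = ⟨1, by omega⟩ := by
            rw [hR'eval, show lst + s - s = lst by abel]
            exact c0_eq_one hm hk rfl
          rw [h1, h2]
          simp [Fin.lt_def]
  refine Relation.ReflTransGen.head ⟨R, hedge⟩
    (reach hm hj hk (j - 1) (vrot r (tailPat (snocPat P R))) r hlex' hap' ?_)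
  intro t ht i
  show tailPat (snocPat P R) (i + r) t = c0 m k hm hk (i + r)
  have htv : (t : ℕ) = j - 1 := by have := t.isLt; omega
  rw [tailPat_snoc, dif_neg (show ¬((t : ℕ) + 1 < j) by omega)]
end

section
/- In every (m,n)_k-ring graph, the in-degree of every vertex equals its out-degree; combined with weak connectivity, the graph is Eulerian. -/
open Finset

set_option linter.unusedSectionVars false
set_option linter.unusedVariables false

namespace RG

/-- argmin existence in a partial order whose `≤` is total. -/
theorem exists_argmin {α : Type*} [PartialOrder α] (total : ∀ a b : α, a ≤ b ∨ b ≤ a)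
    {ι : Type*} [Fintype ι] [Nonempty ι] (f : ι → α) : ∃ u, ∀ r, f u ≤ f r := by
  classical
  obtain ⟨y, hy⟩ := Finset.exists_minimal (s := Finset.univ.image f)
    ⟨f (Classical.arbitrary ι), Finset.mem_image_of_mem f (Finset.mem_univ _)⟩
  obtain ⟨u, -, rfl⟩ := Finset.mem_image.1 hy.1
  refine ⟨u, fun r => ?_⟩
  rcases total (f u) (f r) with h | h
  · exact h
  · exact hy.2 (Finset.mem_image_of_mem f (Finset.mem_univ _)) h

/-- totality of the (partial-order-instance) Lex `≤` on `Fin n → L`,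
given trichotomy of the inner `<`. -/
theorem lex_total_of_tricho {L : Type*} [PartialOrder L]
    (htri : ∀ a b : L, a < b ∨ a = b ∨ b < a) {n : ℕ} (a b : Lex (Fin n → L)) :
    a ≤ b ∨ b ≤ a := by
  haveI : Std.Trichotomous ((· < ·) : L → L → Prop) := ⟨fun a b h1 h2 => by
    rcases htri a b with h | h | h
    · exact absurd h h1
    · exact h
    · exact absurd h h2⟩
  have tri : Pi.Lex (· < ·) (@fun _ => ((· < ·) : L → L → Prop)) (ofLex a) (ofLex b)
      ∨ ofLex a = ofLex b ∨
      Pi.Lex (· < ·) (@fun _ => ((· < ·) : L → L → Prop)) (ofLex b) (ofLex a) :=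
    by
      have T := (Pi.trichotomous_lex (· < ·) (@fun _ => ((· < ·) : L → L → Prop))
        (wellFounded_lt)).trichotomous (ofLex a) (ofLex b)
      by_contra hc; push_neg at hc; exact hc.2.1 (T hc.1 hc.2.2)
  rcases tri with h | h | h
  · exact Or.inl (le_of_lt h)
  · exact Or.inl (le_of_eq h)
  · exact Or.inr (le_of_lt h)

theorem collex_total {m k : ℕ} (a b : Lex (Fin m → Fin k)) : a ≤ b ∨ b ≤ a :=
  lex_total_of_tricho (fun a b => trichotomous a b) a b

theorem patlex_tricho {j k : ℕ} (a b : Lex (Fin j → Fin k)) : a < b ∨ a = b ∨ b < a := by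
  have := (Pi.trichotomous_lex ((· < ·) : Fin j → Fin j → Prop)
    (@fun _ => ((· < ·) : Fin k → Fin k → Prop)) (wellFounded_lt)).trichotomous
      (ofLex a) (ofLex b)
  by_contra hc; push_neg at hc; exact hc.2.1 (this hc.1 hc.2.2)

theorem patlex_total {m j k : ℕ} (a b : Lex (Fin m → Lex (Fin j → Fin k))) : a ≤ b ∨ b ≤ a :=
  lex_total_of_tricho patlex_tricho a b

section Rot
variable {m j k : ℕ} [NeZero m]

theorem vrot_vrot (r s : Fin m) (P : Fin m → Fin j → Fin k) :
    vrot r (vrot s P) = vrot (r + s) P := by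
  funext i t; simp [vrot, add_assoc]

theorem vrot_zero (P : Fin m → Fin j → Fin k) : vrot 0 P = P := by
  funext i t; simp [vrot]

theorem vrot_neg_vrot (r : Fin m) (P : Fin m → Fin j → Fin k) : vrot (-r) (vrot r P) = P := by
  rw [vrot_vrot, neg_add_cancel, vrot_zero]

theorem vrot_cancel {r : Fin m} {P Q : Fin m → Fin j → Fin k} (h : vrot r P = vrot r Q) :
    P = Q := by
  have := congrArg (vrot (-r)) h
  rwa [vrot_neg_vrot, vrot_neg_vrot] at this

theorem patLex_inj {P Q : Fin m → Fin j → Fin k} (h : patLex P = patLex Q) : P = Q := by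
  funext i t
  exact congrFun (congrFun h i) t

theorem patLex_le_antisymm {P Q : Fin m → Fin j → Fin k}
    (h1 : patLex P ≤ patLex Q) (h2 : patLex Q ≤ patLex P) : P = Q :=
  patLex_inj (le_antisymm h1 h2)

theorem lexmin_unique {P Q : Fin m → Fin j → Fin k} (hP : IsLexmin P) (hQ : IsLexmin Q)
    (h : ∃ r, vrot r P = Q) : P = Q := by
  obtain ⟨r, rfl⟩ := h
  refine patLex_le_antisymm (hP r) ?_
  have := hQ (-r)
  rwa [vrot_neg_vrot] at this

noncomputable def minRot (P : Fin m → Fin j → Fin k) : Fin m :=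
  (exists_argmin patlex_total (fun r => patLex (vrot r P))).choose

theorem minRot_spec (P : Fin m → Fin j → Fin k) (r : Fin m) :
    patLex (vrot (minRot P) P) ≤ patLex (vrot r P) :=
  (exists_argmin patlex_total (fun r => patLex (vrot r P))).choose_spec r

noncomputable def lexminRep (P : Fin m → Fin j → Fin k) : Fin m → Fin j → Fin k :=
  vrot (minRot P) P

theorem lexminRep_mem (P : Fin m → Fin j → Fin k) : ∃ r, vrot r P = lexminRep P :=
  ⟨minRot P, rfl⟩

theorem lexminRep_isLexmin (P : Fin m → Fin j → Fin k) : IsLexmin (lexminRep P) := by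
  intro r
  rw [lexminRep, vrot_vrot]
  exact minRot_spec P _

theorem lexminRep_eq_self {P : Fin m → Fin j → Fin k} (h : IsLexmin P) : lexminRep P = P :=
  (lexmin_unique h (lexminRep_isLexmin P) (lexminRep_mem P)).symm

theorem lexminRep_vrot (s : Fin m) (P : Fin m → Fin j → Fin k) :
    lexminRep (vrot s P) = lexminRep P := by
  refine lexmin_unique (lexminRep_isLexmin _) (lexminRep_isLexmin _) ?_
  obtain ⟨a, ha⟩ := lexminRep_mem (vrot s P)
  obtain ⟨b, hb⟩ := lexminRep_mem P
  refine ⟨b - (a + s), ?_⟩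
  rw [← hb, ← ha, vrot_vrot, vrot_vrot, add_assoc, sub_add_cancel]

end Rot

end RG

namespace RG

/-- the first `j` columns of a `(j+1)`-wide pattern. -/
def headPat {m j k : ℕ} (Q : Fin m → Fin (j + 1) → Fin k) : Fin m → Fin j → Fin k :=
  fun i t => Q i t.castSucc

/-- the last column. -/
def lastCol {m j k : ℕ} (Q : Fin m → Fin (j + 1) → Fin k) : Fin m → Fin k :=
  fun i => Q i (Fin.last j)

/-- cyclic rotation of a column. -/
def crot {m k : ℕ} (r : Fin m) (R : Fin m → Fin k) : Fin m → Fin k :=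
  fun i => R (i + r)

/-- cyclic rotation of the columns of a pattern. -/
def colrot {m j k : ℕ} (c : Fin (j + 1)) (Q : Fin m → Fin (j + 1) → Fin k) :
    Fin m → Fin (j + 1) → Fin k :=
  fun i t => Q i (t + c)

/-- row-aperiodicity. -/
def Aper {m j k : ℕ} (Q : Fin m → Fin j → Fin k) : Prop :=
  ∀ r : Fin m, (r : ℕ) ≠ 0 → vrot r Q ≠ Q

def AperCol {m k : ℕ} (R : Fin m → Fin k) : Prop :=
  ∀ r : Fin m, (r : ℕ) ≠ 0 → crot r R ≠ R

section Pat
variable {m j k : ℕ} [NeZero m]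

theorem snoc_head_last (Q : Fin m → Fin (j + 1) → Fin k) :
    snocPat (headPat Q) (lastCol Q) = Q := by
  funext i t
  refine Fin.lastCases ?_ (fun t => ?_) t
  · simp [snocPat, lastCol]
  · simp [snocPat, headPat]

theorem head_snoc (P : Fin m → Fin j → Fin k) (R : Fin m → Fin k) :
    headPat (snocPat P R) = P := by
  funext i t; simp [snocPat, headPat]

theorem last_snoc (P : Fin m → Fin j → Fin k) (R : Fin m → Fin k) :
    lastCol (snocPat P R) = R := by
  funext i; simp [snocPat, lastCol]

theorem vrot_snoc (r : Fin m) (P : Fin m → Fin j → Fin k) (R : Fin m → Fin k) :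
    vrot r (snocPat P R) = snocPat (vrot r P) (crot r R) := rfl

theorem tail_vrot (r : Fin m) (Q : Fin m → Fin (j + 1) → Fin k) :
    tailPat (vrot r Q) = vrot r (tailPat Q) := rfl

theorem head_vrot (r : Fin m) (Q : Fin m → Fin (j + 1) → Fin k) :
    headPat (vrot r Q) = vrot r (headPat Q) := rfl

theorem last_vrot (r : Fin m) (Q : Fin m → Fin (j + 1) → Fin k) :
    lastCol (vrot r Q) = crot r (lastCol Q) := rfl

theorem colrot_vrot (c : Fin (j + 1)) (r : Fin m) (Q : Fin m → Fin (j + 1) → Fin k) :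
    colrot c (vrot r Q) = vrot r (colrot c Q) := rfl

theorem crot_crot (r s : Fin m) (R : Fin m → Fin k) : crot r (crot s R) = crot (r + s) R := by
  funext i; simp [crot, add_assoc]

theorem crot_zero (R : Fin m → Fin k) : crot 0 R = R := by
  funext i; simp [crot]

theorem crot_neg_crot (r : Fin m) (R : Fin m → Fin k) : crot (-r) (crot r R) = R := by
  rw [crot_crot, neg_add_cancel, crot_zero]

theorem colrot_colrot (c d : Fin (j + 1)) (Q : Fin m → Fin (j + 1) → Fin k) :
    colrot c (colrot d Q) = colrot (c + d) Q := by
  funext i t; simp [colrot, add_assoc]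

theorem colrot_zero (Q : Fin m → Fin (j + 1) → Fin k) : colrot 0 Q = Q := by
  funext i t; simp [colrot]

theorem colrot_neg_colrot (c : Fin (j + 1)) (Q : Fin m → Fin (j + 1) → Fin k) :
    colrot (-c) (colrot c Q) = Q := by
  rw [colrot_colrot, neg_add_cancel, colrot_zero]

/-- the head of the left-shifted pattern is the tail. -/
theorem head_colrot_one (Q : Fin m → Fin (j + 1) → Fin k) :
    headPat (colrot 1 Q) = tailPat Q := by
  funext i t
  simp only [headPat, colrot, tailPat]
  congr 1
  ext
  simp [Fin.val_add_one_of_lt]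

/-- the tail of the right-shifted pattern is the head. -/
theorem tail_colrot_neg_one (Q : Fin m → Fin (j + 1) → Fin k) :
    tailPat (colrot (-1) Q) = headPat Q := by
  funext i t
  simp only [headPat, colrot, tailPat]
  congr 1
  have : t.succ + (-1 : Fin (j+1)) + 1 = t.castSucc + 1 := by
    rw [add_assoc, neg_add_cancel, add_zero]
    ext
    rw [Fin.val_add_one_of_lt]
    · simp
    · exact Fin.castSucc_lt_last t
  exact add_right_cancel this

/-- a vertical rotation fixing a pattern fixes each of its columns. -/
theorem crot_col_of_vrot_fix {r : Fin m} {Q : Fin m → Fin j → Fin k}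
    (h : vrot r Q = Q) (t : Fin j) : crot r (fun i => Q i t) = (fun i => Q i t) := by
  funext i
  exact congrFun (congrFun h i) t

/-- a pattern having an aperiodic column is aperiodic. -/
theorem aper_of_aperCol {Q : Fin m → Fin j → Fin k} (t : Fin j)
    (h : AperCol (fun i => Q i t)) : Aper Q := by
  intro r hr hQ
  exact h r hr (crot_col_of_vrot_fix hQ t)

theorem aper_snoc_of_aperCol {P : Fin m → Fin j → Fin k} {R : Fin m → Fin k}
    (h : AperCol R) : Aper (snocPat P R) := by
  intro r hr hQ
  apply h r hr
  have := crot_col_of_vrot_fix hQ (Fin.last j)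
  simpa [snocPat, Fin.snoc_last] using this

theorem aper_vrot {r : Fin m} {Q : Fin m → Fin j → Fin k} (h : Aper Q) : Aper (vrot r Q) := by
  intro s hs hQ
  apply h s hs
  rw [vrot_vrot, add_comm, ← vrot_vrot] at hQ
  exact vrot_cancel hQ

theorem aper_colrot {c : Fin (j + 1)} {Q : Fin m → Fin (j + 1) → Fin k} (h : Aper Q) :
    Aper (colrot c Q) := by
  intro s hs hQ
  apply h s hs
  have : colrot (-c) (colrot c (vrot s Q)) = colrot (-c) (colrot c Q) := by
    rw [colrot_vrot, hQ]
  rwa [colrot_neg_colrot, colrot_neg_colrot] at this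

/-- aperiodicity is equivalent to the existence of a row-Lyndon rotation. -/
theorem aper_iff_lyndon {Q : Fin m → Fin j → Fin k} :
    (∃ r, IsRowLyndon (vrot r Q)) ↔ Aper Q := by
  constructor
  · rintro ⟨r, hL⟩ s hs hQ
    have hfix : vrot s (vrot r Q) = vrot r Q := by
      rw [vrot_vrot, add_comm, ← vrot_vrot, hQ]
    have := hL s hs
    rw [hfix] at this
    exact lt_irrefl _ this
  · intro hA
    refine ⟨minRot Q, fun s hs => ?_⟩
    have hle : patLex (lexminRep Q) ≤ patLex (vrot s (lexminRep Q)) :=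
      lexminRep_isLexmin Q s
    rcases lt_or_eq_of_le hle with h | h
    · exact h
    · exfalso
      have heq : vrot s (lexminRep Q) = lexminRep Q := (patLex_inj h.symm)
      rw [lexminRep, vrot_vrot, add_comm, ← vrot_vrot] at heq
      have := vrot_cancel heq
      exact hA s hs this

end Pat
end RG

namespace RG

section Canon
variable {m j k : ℕ} [NeZero m]

theorem lexminRep_eq_of {X P : Fin m → Fin j → Fin k} (h : ∃ r, vrot r X = P)
    (hP : IsLexmin P) : lexminRep X = P := by
  obtain ⟨r, hr⟩ := h
  refine lexmin_unique (lexminRep_isLexmin X) hP ⟨r - minRot X, ?_⟩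
  rw [lexminRep, vrot_vrot, sub_add_cancel, hr]

def IsCanon (Q : Fin m → Fin (j + 1) → Fin k) : Prop :=
  IsLexmin (headPat Q) ∧ ∀ s : Fin m, vrot s (headPat Q) = headPat Q →
    toLex (lastCol Q) ≤ toLex (lastCol (vrot s Q))

theorem vrot_fix_neg {s : Fin m} {P : Fin m → Fin j → Fin k} (h : vrot s P = P) :
    vrot (-s) P = P := by
  conv_lhs => rw [← h, vrot_neg_vrot]

theorem exists_canon (Q : Fin m → Fin (j + 1) → Fin k) : ∃ u, IsCanon (vrot u Q) := by
  obtain ⟨u₀, hu₀⟩ := exists_argmin patlex_total (fun u => patLex (headPat (vrot u Q)))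
  have hne : Nonempty {u : Fin m // headPat (vrot u Q) = headPat (vrot u₀ Q)} := ⟨⟨u₀, rfl⟩⟩
  obtain ⟨u₁, hu₁⟩ := exists_argmin collex_total
    (fun u : {u : Fin m // headPat (vrot u Q) = headPat (vrot u₀ Q)} =>
      toLex (lastCol (vrot u.1 Q)))
  refine ⟨u₁.1, ?_, ?_⟩
  · intro r
    have e1 : vrot r (headPat (vrot u₁.1 Q)) = headPat (vrot (r + u₁.1) Q) := by
      rw [← vrot_vrot]; rfl
    rw [e1, u₁.2]
    exact hu₀ _
  · intro s hs
    have hmem : headPat (vrot (s + u₁.1) Q) = headPat (vrot u₀ Q) := by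
      rw [← vrot_vrot]
      show vrot s (headPat (vrot u₁.1 Q)) = _
      rw [hs, u₁.2]
    have := hu₁ ⟨s + u₁.1, hmem⟩
    simpa [vrot_vrot] using this

noncomputable def canonRep (Q : Fin m → Fin (j + 1) → Fin k) : Fin m → Fin (j + 1) → Fin k :=
  vrot (exists_canon Q).choose Q

theorem canonRep_isCanon (Q : Fin m → Fin (j + 1) → Fin k) : IsCanon (canonRep Q) :=
  (exists_canon Q).choose_spec

theorem canonRep_mem (Q : Fin m → Fin (j + 1) → Fin k) : ∃ u, vrot u Q = canonRep Q :=
  ⟨(exists_canon Q).choose, rfl⟩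

theorem collex_inj {a b : Fin m → Fin k} (h : toLex a = toLex b) : a = b := h

theorem canon_unique {Q Q' : Fin m → Fin (j + 1) → Fin k} (hQ : IsCanon Q) (hQ' : IsCanon Q')
    (h : ∃ u, vrot u Q = Q') : Q = Q' := by
  obtain ⟨u, hu⟩ := h
  have hhead : headPat Q = headPat Q' :=
    lexmin_unique hQ.1 hQ'.1 ⟨u, by rw [← head_vrot, hu]⟩
  have hfix : vrot u (headPat Q) = headPat Q := by
    show headPat (vrot u Q) = headPat Q
    rw [hu, hhead]
  have h1 : toLex (lastCol Q) ≤ toLex (lastCol Q') := by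
    have := hQ.2 u hfix
    rwa [hu] at this
  have h2 : toLex (lastCol Q') ≤ toLex (lastCol Q) := by
    have hfix' : vrot (-u) (headPat Q') = headPat Q' := by
      rw [← hhead, ← hfix, vrot_neg_vrot, hfix]
    have h3 := hQ'.2 (-u) hfix'
    have h4 : lastCol (vrot (-u) Q') = lastCol Q := by rw [← hu, vrot_neg_vrot]
    rwa [h4] at h3
  have hlast : lastCol Q = lastCol Q' := collex_inj (le_antisymm h1 h2)
  rw [← snoc_head_last Q, ← snoc_head_last Q', hhead, hlast]

theorem canonRep_vrot (s : Fin m) (Q : Fin m → Fin (j + 1) → Fin k) :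
    canonRep (vrot s Q) = canonRep Q := by
  refine canon_unique (canonRep_isCanon _) (canonRep_isCanon _) ?_
  obtain ⟨a, ha⟩ := canonRep_mem (vrot s Q)
  obtain ⟨b, hb⟩ := canonRep_mem Q
  refine ⟨b - (a + s), ?_⟩
  rw [← hb, ← ha, vrot_vrot, vrot_vrot, add_assoc, sub_add_cancel]

theorem canonRep_eq_self {Q : Fin m → Fin (j + 1) → Fin k} (h : IsCanon Q) : canonRep Q = Q :=
  (canon_unique h (canonRep_isCanon Q) (canonRep_mem Q)).symm

/-- condition 5 of `RingEdge` holds for canonical patterns. -/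
theorem cond5_of_canon {Q : Fin m → Fin (j + 1) → Fin k} (hc : IsCanon Q)
    (R' : Fin m → Fin k) (h : ∃ r, vrot r (snocPat (headPat Q) R') = Q) :
    toLex (lastCol Q) ≤ toLex R' := by
  obtain ⟨r, hr⟩ := h
  have hhead : vrot r (headPat Q) = headPat Q := by
    have := congrArg headPat hr
    rwa [head_vrot, head_snoc] at this
  have hlast : crot r R' = lastCol Q := by
    have := congrArg lastCol hr
    rwa [last_vrot, last_snoc] at this
  have hfix : vrot (-r) (headPat Q) = headPat Q := vrot_fix_neg hhead
  have h6 : lastCol (vrot (-r) Q) = R' := by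
    rw [last_vrot, ← hlast, crot_crot, neg_add_cancel, crot_zero]
  have := hc.2 (-r) hfix
  rwa [h6] at this

/-- conversely, edge conditions give canonicity. -/
theorem canon_of_edge {P : Fin m → Fin j → Fin k} {R : Fin m → Fin k} (hP : IsLexmin P)
    (h5 : ∀ R', (∃ r, vrot r (snocPat P R') = snocPat P R) → toLex R ≤ toLex R') :
    IsCanon (snocPat P R) := by
  constructor
  · rwa [head_snoc]
  · intro s hs
    rw [head_snoc] at hs
    rw [last_snoc, last_vrot, last_snoc]
    refine h5 (crot s R) ⟨-s, ?_⟩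
    rw [vrot_snoc, crot_neg_crot, vrot_fix_neg hs]

end Canon

section Balance
variable {m j k : ℕ} [NeZero m] {V : Fin m → Fin j → Fin k}

noncomputable def equivIn (hV : IsLexmin V) :
    {e : (Fin m → Fin j → Fin k) × (Fin m → Fin k) // RingEdge e.1 V e.2} ≃
    {Q : Fin m → Fin (j + 1) → Fin k // IsCanon Q ∧ Aper Q ∧ lexminRep (tailPat Q) = V} where
  toFun e := ⟨snocPat e.1.1 e.1.2, by
    obtain ⟨h1, h2, h3, h4, h5⟩ := e.2
    exact ⟨canon_of_edge h1 h5, aper_iff_lyndon.1 h3, lexminRep_eq_of h4 hV⟩⟩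
  invFun Q := ⟨(headPat Q.1, lastCol Q.1), by
    obtain ⟨hc, ha, ht⟩ := Q.2
    show RingEdge (headPat Q.1) V (lastCol Q.1)
    refine ⟨hc.1, hV, ?_, ?_, ?_⟩
    · rw [snoc_head_last]; exact aper_iff_lyndon.2 ha
    · rw [snoc_head_last]; exact ⟨minRot (tailPat Q.1), ht⟩
    · intro R' hR'
      rw [snoc_head_last] at hR'
      exact cond5_of_canon hc R' hR'⟩
  left_inv e := by
    apply Subtype.ext
    simp only
    rw [head_snoc, last_snoc]
  right_inv Q := by
    apply Subtype.ext
    simp only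
    rw [snoc_head_last]

noncomputable def equivOut (hV : IsLexmin V) :
    {e : (Fin m → Fin j → Fin k) × (Fin m → Fin k) // RingEdge V e.1 e.2} ≃
    {Q : Fin m → Fin (j + 1) → Fin k // IsCanon Q ∧ Aper Q ∧ headPat Q = V} where
  toFun e := ⟨snocPat V e.1.2, by
    obtain ⟨h1, h2, h3, h4, h5⟩ := e.2
    exact ⟨canon_of_edge h1 h5, aper_iff_lyndon.1 h3, head_snoc _ _⟩⟩
  invFun Q := ⟨(lexminRep (tailPat Q.1), lastCol Q.1), by
    obtain ⟨hc, ha, hh⟩ := Q.2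
    have hQ : snocPat V (lastCol Q.1) = Q.1 := by
      conv_rhs => rw [← snoc_head_last Q.1, hh]
    show RingEdge V (lexminRep (tailPat Q.1)) (lastCol Q.1)
    refine ⟨hV, lexminRep_isLexmin _, ?_, ?_, ?_⟩
    · rw [hQ]; exact aper_iff_lyndon.2 ha
    · rw [hQ]; exact ⟨minRot (tailPat Q.1), rfl⟩
    · intro R' hR'
      rw [hQ] at hR'
      have hxx : ∃ r, vrot r (snocPat (headPat Q.1) R') = Q.1 := by rwa [hh]
      exact cond5_of_canon hc R' hxx⟩
  left_inv e := by
    apply Subtype.ext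
    obtain ⟨h1, h2, h3, h4, h5⟩ := e.2
    simp only
    rw [last_snoc]
    have : lexminRep (tailPat (snocPat V e.1.2)) = e.1.1 := lexminRep_eq_of h4 h2
    rw [this]
  right_inv Q := by
    apply Subtype.ext
    simp only
    conv_rhs => rw [← snoc_head_last Q.1, Q.2.2.2]

noncomputable def equivShift (hV : IsLexmin V) :
    {Q : Fin m → Fin (j + 1) → Fin k // IsCanon Q ∧ Aper Q ∧ lexminRep (tailPat Q) = V} ≃
    {Q : Fin m → Fin (j + 1) → Fin k // IsCanon Q ∧ Aper Q ∧ headPat Q = V} where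
  toFun Q := ⟨canonRep (colrot 1 Q.1), by
    obtain ⟨hc, ha, ht⟩ := Q.2
    obtain ⟨u, hu⟩ := canonRep_mem (colrot 1 Q.1)
    refine ⟨canonRep_isCanon _, ?_, ?_⟩
    · rw [← hu]; exact aper_vrot (aper_colrot ha)
    · have hx : vrot u (tailPat Q.1) = headPat (canonRep (colrot 1 Q.1)) := by
        rw [← head_colrot_one, ← head_vrot, hu]
      exact ((lexminRep_eq_of ⟨u, hx⟩ (canonRep_isCanon _).1).symm).trans ht⟩
  invFun Q := ⟨canonRep (colrot (-1) Q.1), by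
    obtain ⟨hc, ha, hh⟩ := Q.2
    obtain ⟨u, hu⟩ := canonRep_mem (colrot (-1) Q.1)
    refine ⟨canonRep_isCanon _, ?_, ?_⟩
    · rw [← hu]; exact aper_vrot (aper_colrot ha)
    · rw [← hu, tail_vrot, lexminRep_vrot, tail_colrot_neg_one, hh, lexminRep_eq_self hV]⟩
  left_inv Q := by
    apply Subtype.ext
    simp only
    obtain ⟨u, hu⟩ := canonRep_mem (colrot 1 Q.1)
    rw [← hu, colrot_vrot, canonRep_vrot, colrot_colrot, neg_add_cancel, colrot_zero,
      canonRep_eq_self Q.2.1]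
  right_inv Q := by
    apply Subtype.ext
    simp only
    obtain ⟨u, hu⟩ := canonRep_mem (colrot (-1) Q.1)
    rw [← hu, colrot_vrot, canonRep_vrot, colrot_colrot, add_neg_cancel, colrot_zero,
      canonRep_eq_self Q.2.1]

theorem balance (hV : IsLexmin V) :
    Nat.card {e : (Fin m → Fin j → Fin k) × (Fin m → Fin k) // RingEdge e.1 V e.2}
      = Nat.card {e : (Fin m → Fin j → Fin k) × (Fin m → Fin k) // RingEdge V e.1 e.2} :=
  Nat.card_congr ((equivIn hV).trans ((equivShift hV).trans (equivOut hV).symm))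

end Balance
end RG

namespace RG

section Conn
variable {m j k : ℕ} [NeZero m]

/-- one step of the sliding window. -/
def shiftOne (Y : Fin m → Fin j → Fin k) (d : Fin m → Fin k) : Fin m → Fin j → Fin k :=
  tailPat (snocPat Y d)

/-- the step relation of the ring graph. -/
def Step (P₁ P₂ : Fin m → Fin j → Fin k) : Prop := ∃ R, RingEdge P₁ P₂ R

theorem shiftOne_lt {Y : Fin m → Fin j → Fin k} {d : Fin m → Fin k} {r : Fin m} {t : Fin j}
    (h : (t : ℕ) + 1 < j) : shiftOne Y d r t = Y r ⟨t + 1, h⟩ := by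
  have : (t.succ : Fin (j + 1)) = Fin.castSucc ⟨t + 1, h⟩ := by
    ext; simp
  simp only [shiftOne, tailPat, snocPat, this, Fin.snoc_castSucc]

theorem shiftOne_last {Y : Fin m → Fin j → Fin k} {d : Fin m → Fin k} {r : Fin m} {t : Fin j}
    (h : ¬ (t : ℕ) + 1 < j) : shiftOne Y d r t = d r := by
  have ht : (t : ℕ) + 1 = j := by omega
  have : (t.succ : Fin (j + 1)) = Fin.last j := by
    ext; simpa using ht
  simp only [shiftOne, tailPat, snocPat, this, Fin.snoc_last]

/-- Existence of an edge out of `lexminRep Y` realizing the window shift, given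
aperiodicity of the extended pattern. -/
theorem step_lexminRep (Y : Fin m → Fin j → Fin k) (d : Fin m → Fin k)
    (hA : Aper (snocPat Y d)) : Step (lexminRep Y) (lexminRep (shiftOne Y d)) := by
  classical
  set P := lexminRep Y with hP
  have hPl : IsLexmin P := lexminRep_isLexmin Y
  set c : Fin m → Fin k := crot (minRot Y) d with hc
  have hsnoc : snocPat P c = vrot (minRot Y) (snocPat Y d) := by
    rw [vrot_snoc]; rfl
  -- stabilizer of P
  haveI : Nonempty {r : Fin m // vrot r P = P} := ⟨⟨0, vrot_zero P⟩⟩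
  obtain ⟨u₀, hu₀⟩ := exists_argmin collex_total
    (fun u : {r : Fin m // vrot r P = P} => toLex (crot u.1 c))
  set R : Fin m → Fin k := crot u₀.1 c with hR
  have hsnoc2 : snocPat P R = vrot u₀.1 (snocPat P c) := by
    rw [vrot_snoc, u₀.2]
  have hAR : Aper (snocPat P R) := by
    rw [hsnoc2, hsnoc, vrot_vrot]
    exact aper_vrot hA
  refine ⟨R, hPl, lexminRep_isLexmin _, aper_iff_lyndon.2 hAR, ?_, ?_⟩
  · -- the head of the edge is the lexmin of the shifted window
    have htl : tailPat (snocPat P R) = vrot (u₀.1 + minRot Y) (shiftOne Y d) := by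
      rw [hsnoc2, hsnoc, vrot_vrot, tail_vrot]; rfl
    rw [htl]
    obtain ⟨r, hr⟩ := lexminRep_mem (vrot (u₀.1 + minRot Y) (shiftOne Y d))
    exact ⟨r, by rw [hr, lexminRep_vrot]⟩
  · -- minimality of the label
    intro R' hR'
    obtain ⟨r, hr⟩ := hR'
    have hhead : vrot r P = P := by
      have := congrArg headPat hr
      rwa [head_vrot, head_snoc, head_snoc] at this
    have hlast : crot r R' = R := by
      have := congrArg lastCol hr
      rwa [last_vrot, last_snoc, last_snoc] at this
    have hstab : vrot (-r + u₀.1) P = P := by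
      rw [← vrot_vrot, u₀.2, vrot_fix_neg hhead]
    have hR'eq : R' = crot (-r + u₀.1) c := by
      rw [← crot_crot, ← hR, ← hlast, crot_crot, neg_add_cancel, crot_zero]
    rw [hR'eq]
    exact hu₀ ⟨-r + u₀.1, hstab⟩

/-- validity of a sequence of window shifts. -/
def Good : List (Fin m → Fin k) → (Fin m → Fin j → Fin k) → Prop
  | [], _ => True
  | d :: ds, Y => Aper (snocPat Y d) ∧ Good ds (shiftOne Y d)

theorem reach_shiftN : ∀ (ds : List (Fin m → Fin k)) (Y : Fin m → Fin j → Fin k),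
    Good ds Y → Relation.ReflTransGen Step (lexminRep Y) (lexminRep (ds.foldl shiftOne Y))
  | [], Y, _ => by exact Relation.ReflTransGen.refl
  | d :: ds, Y, h => by
    refine Relation.ReflTransGen.head (step_lexminRep Y d h.1) ?_
    exact reach_shiftN ds (shiftOne Y d) h.2

theorem shiftN_get_lt : ∀ (ds : List (Fin m → Fin k)) (Y : Fin m → Fin j → Fin k)
    (r : Fin m) (t : Fin j) (h : (t : ℕ) + ds.length < j),
    ds.foldl shiftOne Y r t = Y r ⟨t + ds.length, h⟩
  | [], Y, r, t, h => by simp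
  | d :: ds, Y, r, t, h => by
    have h' : (t : ℕ) + ds.length < j := by simp at h; omega
    rw [List.foldl_cons, shiftN_get_lt ds (shiftOne Y d) r t h']
    have h'' : ((⟨(t : ℕ) + ds.length, h'⟩ : Fin j) : ℕ) + 1 < j := by simp at h ⊢; omega
    rw [shiftOne_lt h'']
    rfl

theorem shiftN_get_ge : ∀ (ds : List (Fin m → Fin k)) (Y : Fin m → Fin j → Fin k)
    (r : Fin m) (t : Fin j) (h : j ≤ (t : ℕ) + ds.length)
    (h2 : (t : ℕ) + ds.length - j < ds.length),
    ds.foldl shiftOne Y r t = ds.get ⟨(t : ℕ) + ds.length - j, h2⟩ r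
  | [], Y, r, t, h, h2 => by simp at h2
  | d :: ds, Y, r, t, h, h2 => by
    rw [List.foldl_cons]
    by_cases h' : (t : ℕ) + ds.length < j
    · have hj : (t : ℕ) + ds.length = j - 1 := by simp at h; omega
      rw [shiftN_get_lt ds (shiftOne Y d) r t h']
      have h'' : ¬ ((⟨(t : ℕ) + ds.length, h'⟩ : Fin j) : ℕ) + 1 < j := by simp; omega
      rw [shiftOne_last h'']
      have : (t : ℕ) + (d :: ds).length - j = 0 := by simp; omega
      simp only [this]
      rfl
    · push_neg at h'
      have h2' : (t : ℕ) + ds.length - j < ds.length := by omega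
      rw [shiftN_get_ge ds (shiftOne Y d) r t h' h2']
      have : (t : ℕ) + (d :: ds).length - j = ((t : ℕ) + ds.length - j) + 1 := by
        simp; omega
      have h2'' : ((t : ℕ) + ds.length - j) + 1 < (d :: ds).length := by
        simp only [List.length_cons]; omega
      have hidx : (⟨(t : ℕ) + (d :: ds).length - j, h2⟩ : Fin (d :: ds).length)
          = ⟨((t : ℕ) + ds.length - j) + 1, h2''⟩ := by
        ext; simp only [List.length_cons]; omega
      rw [hidx, List.get_cons_succ]

end Conn
end RG

namespace RG
section Conn2
variable {m j k : ℕ} [NeZero m]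

theorem aper_snoc_of_col {Y : Fin m → Fin j → Fin k} (q : Fin j)
    (hq : AperCol (fun i => Y i q)) (d : Fin m → Fin k) : Aper (snocPat Y d) := by
  refine aper_of_aperCol q.castSucc ?_
  have : (fun i => snocPat Y d i q.castSucc) = (fun i => Y i q) := by
    funext i; simp [snocPat]
  rw [this]
  exact hq

theorem goodW : ∀ (ds : List (Fin m → Fin k)), ds.length ≤ j →
    ∀ Y : Fin m → Fin j → Fin k,
    (∃ q : Fin j, ds.length ≤ (q : ℕ) + 1 ∧ AperCol (fun i => Y i q)) → Good ds Y
  | [], _, Y, _ => trivial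
  | d :: ds, hlen, Y, ⟨q, hq1, hq2⟩ => by
    refine ⟨aper_snoc_of_col q hq2 d, ?_⟩
    match ds, hlen, hq1 with
    | [], _, _ => trivial
    | d' :: ds', hlen, hq1 =>
      have hlen' : (d' :: ds').length ≤ j := by simp at hlen ⊢; omega
      have hq : 1 ≤ (q : ℕ) := by simp at hq1; omega
      have hq' : (q : ℕ) - 1 + 1 < j := by omega
      refine goodW (d' :: ds') hlen' (shiftOne Y d) ⟨⟨(q : ℕ) - 1, by omega⟩, ?_, ?_⟩
      · simp at hq1 ⊢; omega
      · have : (fun i => shiftOne Y d i ⟨(q : ℕ) - 1, by omega⟩) = (fun i => Y i q) := by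
          funext i
          rw [shiftOne_lt (by simpa using hq')]
          congr 1
          ext; simp; omega
        rw [this]
        exact hq2

theorem shiftN_full (ds : List (Fin m → Fin k)) (hlen : ds.length = j)
    (Y : Fin m → Fin j → Fin k) (r : Fin m) (t : Fin j) (h : (t : ℕ) < ds.length) :
    ds.foldl shiftOne Y r t = ds.get ⟨t, h⟩ r := by
  have h1 : j ≤ (t : ℕ) + ds.length := by omega
  have h2 : (t : ℕ) + ds.length - j < ds.length := by omega
  have hidx : (⟨(t : ℕ) + ds.length - j, h2⟩ : Fin ds.length) = ⟨t, h⟩ := by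
    rw [Fin.mk_eq_mk]; omega
  rw [shiftN_get_ge ds Y r t h1 h2, hidx]

end Conn2

section Conn3
variable {m j k : ℕ}

/-- connectivity of the ring graph. -/
theorem reach (hm : 2 ≤ m) (hj : 1 ≤ j) (hk : 2 ≤ k)
    {V W : Fin m → Fin j → Fin k} (hV : IsLexmin V) (hW : IsLexmin W) :
    Relation.ReflTransGen Step V W := by
  haveI : NeZero m := ⟨by omega⟩
  -- an aperiodic column
  set a : Fin m → Fin k := fun i => if i = 0 then ⟨1, by omega⟩ else ⟨0, by omega⟩ with ha
  have haper : AperCol a := by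
    intro r hr hcr
    have h0 := congrFun hcr 0
    have : a (0 + r) = a 0 := h0
    rw [zero_add] at this
    have hr0 : r ≠ 0 := fun h => hr (by simp [h])
    simp only [ha, if_pos rfl, if_neg hr0] at this
    exact absurd (congrArg Fin.val this) (by simp)
  set ws : List (Fin m → Fin k) := (List.finRange j).map (fun t i => W i t) with hws
  have hwslen : ws.length = j := by simp [hws]
  have hwsget : ∀ (t : Fin j) (h : (t : ℕ) < ws.length), ws.get ⟨t, h⟩ = fun i => W i t := by
    intro t h
    simp [hws]
  have hgood : Good (a :: ws) V := by
    refine ⟨aper_snoc_of_aperCol haper, ?_⟩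
    refine goodW ws (by omega) (shiftOne V a)
      ⟨⟨j - 1, by omega⟩, by show ws.length ≤ j - 1 + 1; rw [hwslen]; omega, ?_⟩
    have : (fun i => shiftOne V a i ⟨j - 1, by omega⟩) = a := by
      funext i
      rw [shiftOne_last (by simp; omega)]
    rw [this]
    exact haper
  have hfin : (a :: ws).foldl shiftOne V = W := by
    funext r t
    rw [List.foldl_cons]
    have h : (t : ℕ) < ws.length := by omega
    rw [shiftN_full ws hwslen (shiftOne V a) r t h, hwsget t h]
  have := reach_shiftN (a :: ws) V hgood
  rwa [hfin, lexminRep_eq_self hV, lexminRep_eq_self hW] at this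

/-- there exists at least one edge. -/
theorem edge_nonempty (hm : 2 ≤ m) (hj : 1 ≤ j) (hk : 2 ≤ k) :
    ∃ P₁ P₂ R, RingEdge (P₁ : Fin m → Fin j → Fin k) P₂ R := by
  haveI : NeZero m := ⟨by omega⟩
  set a : Fin m → Fin k := fun i => if i = 0 then ⟨1, by omega⟩ else ⟨0, by omega⟩ with ha
  have haper : AperCol a := by
    intro r hr hcr
    have h0 := congrFun hcr 0
    have : a (0 + r) = a 0 := h0
    rw [zero_add] at this
    have hr0 : r ≠ 0 := fun h => hr (by simp [h])
    simp only [ha, if_pos rfl, if_neg hr0] at this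
    exact absurd (congrArg Fin.val this) (by simp)
  set Y : Fin m → Fin j → Fin k := fun _ _ => ⟨0, by omega⟩ with hY
  obtain ⟨R, hR⟩ := step_lexminRep Y a (aper_snoc_of_aperCol haper)
  exact ⟨_, _, R, hR⟩

end Conn3
end RG

namespace RG

section Euler
variable {Vt Et : Type*}

theorem chain'_iff_get' {R : Et → Et → Prop} {l : List Et} :
    List.Chain' R l ↔ ∀ (i : ℕ) (h : i < l.length - 1),
      R (l.get ⟨i, by omega⟩) (l.get ⟨i + 1, by omega⟩) := by
  show List.IsChain R l ↔ _
  rw [List.isChain_iff_getElem]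
  constructor
  · intro h i hi; exact h i (by omega)
  · intro h i hi; exact h i (by omega)

theorem getLast_eq_get' {l : List Et} (h : l ≠ []) :
    l.getLast h = l.get ⟨l.length - 1, by
      have := List.length_pos_iff.2 h; omega⟩ :=
  List.getLast_eq_getElem h

/-- a rotation of a closed chain is a chain. -/
theorem chain'_rotate_of_closed {R : Et → Et → Prop} {l : List Et} (h : List.Chain' R l)
    (hne : l ≠ []) (hcl : R (l.getLast hne) (l.head hne)) (t : ℕ) :
    List.Chain' R (l.rotate t) := by
  have hn : 0 < l.length := List.length_pos_iff.2 hne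
  rw [chain'_iff_get'] at h ⊢
  intro i hi
  rw [List.length_rotate] at hi
  rw [List.get_rotate, List.get_rotate]
  by_cases hc : (i + t) % l.length = l.length - 1
  · have hc2 : (i + 1 + t) % l.length = 0 := by
      have e1 : i + 1 + t = (i + t) + 1 := by omega
      rcases Nat.lt_or_ge 1 l.length with h1 | h1
      · rw [e1, Nat.add_mod, hc, Nat.mod_eq_of_lt h1]
        have e6 : l.length - 1 + 1 = l.length := by omega
        rw [e6, Nat.mod_self]
      · have hl1 : l.length = 1 := by omega
        calc (i + 1 + t) % l.length = (i + 1 + t) % 1 := by rw [hl1]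
        _ = 0 := Nat.mod_one _
    have e2 : (⟨(i + t) % l.length, by have := Nat.mod_lt (i + t) hn; omega⟩ : Fin l.length)
        = ⟨l.length - 1, by omega⟩ := Fin.ext hc
    have e3 : (⟨(i + 1 + t) % l.length, by have := Nat.mod_lt (i + 1 + t) hn; omega⟩ :
        Fin l.length) = ⟨0, hn⟩ := Fin.ext hc2
    have egl : l.get ⟨(i + t) % l.length, by have := Nat.mod_lt (i + t) hn; omega⟩
        = l.getLast hne := by
      rw [e2, getLast_eq_get']
    have ehd : l.get ⟨(i + 1 + t) % l.length, by have := Nat.mod_lt (i + 1 + t) hn; omega⟩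
        = l.head hne := by
      rw [e3, List.get_mk_zero]
    rw [egl, ehd]
    exact hcl
  · have hmod : (i + t) % l.length < l.length := Nat.mod_lt _ hn
    have h1 : (i + t) % l.length < l.length - 1 := by omega
    have h2 : (i + 1 + t) % l.length = (i + t) % l.length + 1 := by
      have e1 : i + 1 + t = (i + t) + 1 := by omega
      rw [e1, Nat.add_mod]
      have h1'' : 1 % l.length = 1 := by
        rcases Nat.lt_or_ge 1 l.length with hx | hx
        · exact Nat.mod_eq_of_lt hx
        · omega
      rw [h1'', Nat.mod_eq_of_lt (by omega)]
    have := h ((i + t) % l.length) h1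
    have e4 : (⟨(i + 1 + t) % l.length, by have := Nat.mod_lt (i + 1 + t) hn; omega⟩ :
        Fin l.length) = ⟨(i + t) % l.length + 1, by omega⟩ := Fin.ext h2
    rw [e4]
    exact this

variable [Fintype Et] [DecidableEq Et]

theorem directed_euler (src tgt : Et → Vt) (ne : Nonempty Et)
    (bal : ∀ v : Vt, Nat.card {e : Et // tgt e = v} = Nat.card {e : Et // src e = v})
    (conn : ∀ e e' : Et, Relation.ReflTransGen
      (fun a b => ∃ f : Et, src f = a ∧ tgt f = b) (tgt e) (src e')) :
    ∃ l : List Et, l ≠ [] ∧ l.Nodup ∧ (∀ e, e ∈ l) ∧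
      ∀ i : Fin l.length, tgt (l.get i) =
        src (l.get ⟨((i : ℕ) + 1) % l.length,
          Nat.mod_lt _ (Nat.lt_of_le_of_lt (Nat.zero_le _) i.2)⟩) := by
  classical
  set Trail : List Et → Prop := fun l => l.Nodup ∧ l.Chain' (fun a b => tgt a = src b)
    with hTrail
  set P : ℕ → Prop := fun n => ∃ l, Trail l ∧ l.length = n with hPdef
  have hP1 : P 1 :=
    ⟨[Classical.arbitrary Et], ⟨List.nodup_singleton _, List.isChain_singleton _⟩, rfl⟩
  have hbound : ∀ nn, P nn → nn ≤ Fintype.card Et := by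
    rintro nn ⟨l, ⟨hnd, -⟩, hl⟩
    rw [← hl]
    exact hnd.length_le_card
  set N := Nat.findGreatest P (Fintype.card Et) with hN
  have hcard1 : 1 ≤ Fintype.card Et := Fintype.card_pos
  have hN1 : 1 ≤ N := Nat.le_findGreatest hcard1 hP1
  have hPN : P N := Nat.findGreatest_spec hcard1 hP1
  have hmax : ∀ l', Trail l' → l'.length ≤ N := fun l' ht =>
    Nat.le_findGreatest (hbound _ ⟨l', ht, rfl⟩) ⟨l', ht, rfl⟩
  obtain ⟨l, hT, hlen⟩ := hPN
  have hn : 0 < l.length := by omega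
  have hne : l ≠ [] := List.ne_nil_of_length_pos hn
  have chain : ∀ (i : ℕ) (h : i < l.length - 1),
      tgt (l.get ⟨i, by omega⟩) = src (l.get ⟨i + 1, by omega⟩) :=
    fun i h => chain'_iff_get'.1 hT.2 i h
  -- Step 1: every edge leaving the last vertex of the trail is on the trail
  have hout : ∀ f : Et, src f = tgt (l.getLast hne) → f ∈ l := by
    intro f hf
    by_contra hfl
    have hT' : Trail (l ++ [f]) := by
      constructor
      · exact List.nodup_append.2 ⟨hT.1, List.nodup_singleton _, by
          intro a ha b hb
          simp only [List.mem_singleton] at hb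
          subst hb
          rintro rfl
          exact hfl ha⟩
      · refine List.isChain_append.2 ⟨hT.2, List.isChain_singleton _, ?_⟩
        intro x hx y hy
        rw [List.getLast?_eq_getLast hne] at hx
        simp only [Option.mem_some_iff] at hx
        simp only [List.head?_cons, Option.mem_some_iff] at hy
        subst hx; subst hy
        rw [hf]
    have := hmax _ hT'
    simp only [List.length_append, List.length_singleton] at this
    omega
  -- Step 2: the maximal trail is closed
  have hclosed_get : tgt (l.get ⟨l.length - 1, by omega⟩) = src (l.get ⟨0, hn⟩) := by
    set v := tgt (l.getLast hne) with hv
    set A : Finset (Fin l.length) := Finset.univ.filter (fun i => tgt (l.get i) = v) with hA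
    set B : Finset (Fin l.length) := Finset.univ.filter (fun i => src (l.get i) = v) with hB
    set B' : Finset (Fin l.length) := B.filter (fun i => (i : ℕ) ≠ 0) with hB'
    set ilast : Fin l.length := ⟨l.length - 1, by omega⟩ with hilast
    have hilastA : ilast ∈ A := by
      rw [hA, Finset.mem_filter]
      exact ⟨Finset.mem_univ _, by rw [hv, getLast_eq_get']⟩
    have hAB : (A.erase ilast).card = B'.card := by
      refine Finset.card_bij' (fun a ha => ⟨(a : ℕ) + 1, ?_⟩) (fun b hb => ⟨(b : ℕ) - 1, ?_⟩)
        ?_ ?_ ?_ ?_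
      · have h1 : a ≠ ilast := (Finset.mem_erase.1 ha).1
        have h2 : (a : ℕ) ≠ l.length - 1 := fun hc => h1 (Fin.ext hc)
        have := a.2
        omega
      · have := b.2
        omega
      · intro a ha
        have h1 : a ≠ ilast := (Finset.mem_erase.1 ha).1
        have h2 : (a : ℕ) ≠ l.length - 1 := fun hc => h1 (Fin.ext hc)
        have h3 : (a : ℕ) < l.length - 1 := by have := a.2; omega
        have h4 : a ∈ A := (Finset.mem_erase.1 ha).2
        have h5 : tgt (l.get a) = v := (Finset.mem_filter.1 h4).2
        rw [hB', Finset.mem_filter, hB, Finset.mem_filter]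
        refine ⟨⟨Finset.mem_univ _, ?_⟩, by simp⟩
        have := chain (a : ℕ) h3
        rw [← this]
        have ea : (⟨(a : ℕ), by omega⟩ : Fin l.length) = a := Fin.ext rfl
        rw [ea]
        exact h5
      · intro b hb
        have h1 : (b : ℕ) ≠ 0 := (Finset.mem_filter.1 hb).2
        have h2 : src (l.get b) = v := (Finset.mem_filter.1 ((Finset.mem_filter.1 hb).1)).2
        have h3 : (b : ℕ) - 1 < l.length - 1 := by have := b.2; omega
        rw [Finset.mem_erase]
        constructor
        · intro hc
          have := congrArg Fin.val hc
          simp only [hilast] at this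
          have := b.2
          omega
        · rw [hA, Finset.mem_filter]
          refine ⟨Finset.mem_univ _, ?_⟩
          have := chain ((b : ℕ) - 1) h3
          have eb : (⟨(b : ℕ) - 1 + 1, by omega⟩ : Fin l.length) = b :=
            Fin.ext (show (b : ℕ) - 1 + 1 = (b : ℕ) by omega)
          rw [eb] at this
          rw [this, h2]
      · intro a ha
        exact Fin.ext (show (a : ℕ) + 1 - 1 = a by omega)
      · intro b hb
        have h1 : (b : ℕ) ≠ 0 := (Finset.mem_filter.1 hb).2
        exact Fin.ext (show (b : ℕ) - 1 + 1 = b by omega)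
    have hA_le : A.card ≤ (Finset.univ.filter (fun e => tgt e = v)).card := by
      refine Finset.card_le_card_of_injOn (fun i => l.get i) ?_ ?_
      · intro a ha
        rw [Finset.mem_coe, Finset.mem_filter]
        exact ⟨Finset.mem_univ _, (Finset.mem_filter.1 ha).2⟩
      · intro a _ b _ hab
        exact (hT.1.get_inj_iff).1 hab
    have hB_eq : B.card = (Finset.univ.filter (fun e => src e = v)).card := by
      refine Finset.card_bij (fun i _ => l.get i) ?_ ?_ ?_
      · intro a ha
        rw [Finset.mem_filter]
        exact ⟨Finset.mem_univ _, (Finset.mem_filter.1 ha).2⟩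
      · intro a _ b _ hab
        exact (hT.1.get_inj_iff).1 hab
      · intro e he
        have hev : src e = v := (Finset.mem_filter.1 he).2
        obtain ⟨i, hi⟩ := List.mem_iff_get.1 (hout e hev)
        exact ⟨i, Finset.mem_filter.2 ⟨Finset.mem_univ _, by rw [hi]; exact hev⟩, hi⟩
    have hTS : (Finset.univ.filter (fun e => tgt e = v)).card
        = (Finset.univ.filter (fun e => src e = v)).card := by
      have := bal v
      rwa [Nat.card_eq_fintype_card, Nat.card_eq_fintype_card,
        Fintype.card_subtype, Fintype.card_subtype] at this
    have hAcard : (A.erase ilast).card + 1 = A.card := Finset.card_erase_add_one hilastA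
    have h0B : (⟨0, hn⟩ : Fin l.length) ∈ B := by
      by_contra h0
      have hBB : B' = B := by
        rw [hB']
        refine Finset.filter_eq_self.2 ?_
        intro i hi hiz
        have : i = (⟨0, hn⟩ : Fin l.length) := Fin.ext hiz
        rw [this] at hi
        exact h0 hi
      have c1 : B'.card = B.card := by rw [hBB]
      omega
    have := (Finset.mem_filter.1 h0B).2
    rw [this, hv, getLast_eq_get']
  have hcl : tgt (l.getLast hne) = src (l.head hne) := by
    rw [getLast_eq_get', ← List.get_mk_zero hn]
    exact hclosed_get
  -- Step 3: every edge leaving any trail vertex is on the trail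
  have hext : ∀ (i : Fin l.length) (f : Et), src f = tgt (l.get i) → f ∈ l := by
    intro i f hsf
    by_contra hfl
    set t := (i : ℕ) + 1 with ht
    set l' := l.rotate t with hl'
    have hlen' : l'.length = l.length := List.length_rotate l t
    have hne' : l' ≠ [] := List.ne_nil_of_length_pos (by omega)
    have hperm : l'.Perm l := List.rotate_perm l t
    have hlast' : l'.getLast hne' = l.get i := by
      rw [getLast_eq_get']
      rw [List.get_rotate]
      congr 1
      apply Fin.ext
      show (l'.length - 1 + t) % l.length = (i : ℕ)
      rw [hlen']
      have e1 : l.length - 1 + t = l.length + (i : ℕ) := by have := i.2; omega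
      rw [e1, Nat.add_mod_left, Nat.mod_eq_of_lt i.2]
    have hT' : Trail (l' ++ [f]) := by
      constructor
      · refine List.nodup_append.2 ⟨List.nodup_rotate.2 hT.1, List.nodup_singleton _, ?_⟩
        intro a ha b hb
        simp only [List.mem_singleton] at hb
        subst hb
        rintro rfl
        exact hfl (hperm.mem_iff.1 ha)
      · refine List.isChain_append.2
          ⟨chain'_rotate_of_closed hT.2 hne hcl t, List.isChain_singleton _, ?_⟩
        intro x hx y hy
        rw [List.getLast?_eq_getLast hne'] at hx
        simp only [Option.mem_some_iff] at hx
        simp only [List.head?_cons, Option.mem_some_iff] at hy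
        subst hx; subst hy
        rw [hlast', hsf]
    have := hmax _ hT'
    simp only [List.length_append, List.length_singleton] at this
    omega
  -- Step 4: all vertices reachable from the endpoint are on the trail
  have honT : ∀ w, Relation.ReflTransGen (fun a b => ∃ f : Et, src f = a ∧ tgt f = b)
      (tgt (l.getLast hne)) w → ∃ i : Fin l.length, tgt (l.get i) = w := by
    intro w hw
    induction hw with
    | refl => exact ⟨⟨l.length - 1, by omega⟩, by rw [← getLast_eq_get']⟩
    | tail hab hbc ih =>
      obtain ⟨i, hi⟩ := ih
      obtain ⟨f, hf1, hf2⟩ := hbc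
      have hfl : f ∈ l := hext i f (by rw [hf1, hi])
      obtain ⟨i2, hi2⟩ := List.mem_iff_get.1 hfl
      exact ⟨i2, by rw [hi2, hf2]⟩
  -- Step 5: completeness
  have hcomp : ∀ e : Et, e ∈ l := by
    intro e
    obtain ⟨i, hi⟩ := honT (src e) (conn (l.getLast hne) e)
    exact hext i e hi.symm
  -- Step 6: conclusion
  refine ⟨l, hne, hT.1, hcomp, ?_⟩
  rintro ⟨iv, hiv⟩
  by_cases h : iv + 1 < l.length
  · have e1 : (⟨(iv + 1) % l.length, Nat.mod_lt _ (Nat.lt_of_le_of_lt (Nat.zero_le _) hiv)⟩ :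
        Fin l.length) = ⟨iv + 1, h⟩ := Fin.ext (Nat.mod_eq_of_lt h)
    rw [e1]
    exact chain iv (by omega)
  · have hiv1 : iv = l.length - 1 := by omega
    have e1 : (⟨(iv + 1) % l.length, Nat.mod_lt _ (Nat.lt_of_le_of_lt (Nat.zero_le _) hiv)⟩ :
        Fin l.length) = ⟨0, hn⟩ := Fin.ext (by
      show (iv + 1) % l.length = 0
      have : iv + 1 = l.length := by omega
      rw [this, Nat.mod_self])
    have e2 : (⟨iv, hiv⟩ : Fin l.length) = ⟨l.length - 1, by omega⟩ := Fin.ext hiv1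
    rw [e1, e2]
    exact hclosed_get

end Euler
end RG

/-- In every `(m, j+1)_k`-ring graph, the in-degree of each vertex equals its out-degree;
combined with weak connectivity, the graph is Eulerian, i.e. it has a closed directed walk
using every edge exactly once. -/
theorem ringGraph_eulerian (m j k : ℕ) (hm : 2 ≤ m) (hj : 1 ≤ j) (hk : 2 ≤ k) :
    (∀ V : Fin m → Fin j → Fin k, IsLexmin V →
      Nat.card {e : (Fin m → Fin j → Fin k) × (Fin m → Fin k) // RingEdge e.1 V e.2}
        = Nat.card {e : (Fin m → Fin j → Fin k) × (Fin m → Fin k) // RingEdge V e.1 e.2}) ∧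
    ∃ l : List {e : (Fin m → Fin j → Fin k) × (Fin m → Fin j → Fin k) × (Fin m → Fin k) //
        RingEdge e.1 e.2.1 e.2.2},
      l ≠ [] ∧ l.Nodup ∧ (∀ e, e ∈ l) ∧
      ∀ i : Fin l.length,
        (l.get i).1.2.1
          = (l.get ⟨((i : ℕ) + 1) % l.length,
              Nat.mod_lt _ (Nat.lt_of_le_of_lt (Nat.zero_le _) i.2)⟩).1.1 := by
    classical
  haveI : NeZero m := ⟨by omega⟩
  constructor
  · intro V hV
    exact RG.balance hV
  · set Et := {e : (Fin m → Fin j → Fin k) × (Fin m → Fin j → Fin k) × (Fin m → Fin k) //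
      RingEdge e.1 e.2.1 e.2.2} with hEt
    haveI : Fintype Et := Fintype.ofFinite Et
    set src : Et → (Fin m → Fin j → Fin k) := fun e => e.1.1 with hsrc
    set tgt : Et → (Fin m → Fin j → Fin k) := fun e => e.1.2.1 with htgt
    have ne : Nonempty Et := by
      obtain ⟨P₁, P₂, R, hR⟩ := RG.edge_nonempty hm hj hk
      exact ⟨⟨(P₁, P₂, R), hR⟩⟩
    have bal : ∀ v, Nat.card {e : Et // tgt e = v} = Nat.card {e : Et // src e = v} := by
      intro v
      by_cases hv : IsLexmin v
      · have e1 : {e : Et // tgt e = v} ≃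
            {e : (Fin m → Fin j → Fin k) × (Fin m → Fin k) // RingEdge e.1 v e.2} :=
          { toFun := fun e => ⟨(e.1.1.1, e.1.1.2.2), by
              obtain ⟨⟨⟨P₁, P₂, R⟩, hR⟩, hP⟩ := e
              have h2 : P₂ = v := hP
              subst h2
              exact hR⟩
            invFun := fun e => ⟨⟨(e.1.1, v, e.1.2), e.2⟩, rfl⟩
            left_inv := fun e => by
              apply Subtype.ext
              apply Subtype.ext
              obtain ⟨⟨⟨P₁, P₂, R⟩, hR⟩, hP⟩ := e
              have h2 : P₂ = v := hP
              subst h2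
              rfl
            right_inv := fun e => rfl }
        have e2 : {e : Et // src e = v} ≃
            {e : (Fin m → Fin j → Fin k) × (Fin m → Fin k) // RingEdge v e.1 e.2} :=
          { toFun := fun e => ⟨(e.1.1.2.1, e.1.1.2.2), by
              obtain ⟨⟨⟨P₁, P₂, R⟩, hR⟩, hP⟩ := e
              have h2 : P₁ = v := hP
              subst h2
              exact hR⟩
            invFun := fun e => ⟨⟨(v, e.1.1, e.1.2), e.2⟩, rfl⟩
            left_inv := fun e => by
              apply Subtype.ext
              apply Subtype.ext
              obtain ⟨⟨⟨P₁, P₂, R⟩, hR⟩, hP⟩ := e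
              have h2 : P₁ = v := hP
              subst h2
              rfl
            right_inv := fun e => rfl }
        rw [Nat.card_congr e1, Nat.card_congr e2]
        exact RG.balance hv
      · haveI h1 : IsEmpty {e : Et // tgt e = v} := ⟨fun e => by
          have h := e.1.2
          have h2 := e.2
          simp only [htgt] at h2
          exact hv (h2 ▸ h.2.1)⟩
        haveI h2 : IsEmpty {e : Et // src e = v} := ⟨fun e => by
          have h := e.1.2
          have h2 := e.2
          simp only [hsrc] at h2
          exact hv (h2 ▸ h.1)⟩
        rw [Nat.card_of_isEmpty, Nat.card_of_isEmpty]
    have conn : ∀ e e' : Et, Relation.ReflTransGen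
        (fun a b => ∃ f : Et, src f = a ∧ tgt f = b) (tgt e) (src e') := by
      intro e e'
      have h1 : IsLexmin (tgt e) := e.2.2.1
      have h2 : IsLexmin (src e') := e'.2.1
      refine Relation.ReflTransGen.mono ?_ _ _ (RG.reach hm hj hk h1 h2)
      rintro a b ⟨R, hR⟩
      exact ⟨⟨(a, b, R), hR⟩, rfl, rfl⟩
    obtain ⟨l, h1, h2, h3, h4⟩ := RG.directed_euler src tgt ne bal conn
    exact ⟨l, h1, h2, h3, h4⟩
end
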